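/- Fix H ∈ (0,1) and let γ_H(k) = −½(|k−2|^{2H} − 4|k−1|^{2H} + 6|k|^{2H} − 4|k+1|^{2H} + |k+2|^{2H}) for integer k. Then the series Σ_{k=1}^{∞} |γ_H(k)| and Σ_{k=1}^{∞} γ_H(k)² both converge (the sequences k ↦ γ_H(k) and k ↦ γ_H(k)² are summable over k ≥ 1). -/

import Mathlib

open Real
open Set

noncomputable def D3 (q x : ℝ) : ℝ := (x+3)^q - 3*(x+2)^q + 3*(x+1)^q - x^q
noncomputable def D2 (q x : ℝ) : ℝ := (x+2)^q - 2*(x+1)^q + x^q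
noncomputable def D1 (q x : ℝ) : ℝ := (x+1)^q - x^q

lemma hd_shift (q c x : ℝ) (h : 0 < x + c) :
    HasDerivAt (fun y : ℝ => (y + c) ^ q) (q * (x + c) ^ (q - 1)) x := by
  have h1 : HasDerivAt (fun y : ℝ => y + c) 1 x := (hasDerivAt_id x).add_const c
  have h2 := (Real.hasDerivAt_rpow_const (x := x + c) (p := q) (Or.inl h.ne')).comp x h1
  simpa [Function.comp_def] using h2

lemma hd_D3 (q x : ℝ) (hx : 0 < x) : HasDerivAt (D3 q) (q * D3 (q-1) x) x := by
  have h3 := hd_shift q 3 x (by linarith)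
  have h2 := (hd_shift q 2 x (by linarith)).const_mul 3
  have h1 := (hd_shift q 1 x (by linarith)).const_mul 3
  have h0 := Real.hasDerivAt_rpow_const (x := x) (p := q) (Or.inl hx.ne')
  have := ((h3.sub h2).add h1).sub h0
  convert this using 1
  · rfl
  · rfl
  · rfl
  simp [D3]; ring

lemma hd_D2 (q x : ℝ) (hx : 0 < x) : HasDerivAt (D2 q) (q * D2 (q-1) x) x := by
  have h2 := hd_shift q 2 x (by linarith)
  have h1 := (hd_shift q 1 x (by linarith)).const_mul 2
  have h0 := Real.hasDerivAt_rpow_const (x := x) (p := q) (Or.inl hx.ne')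
  have := (h2.sub h1).add h0
  convert this using 1
  · rfl
  · rfl
  · rfl
  simp [D2]; ring

lemma hd_D1 (q x : ℝ) (hx : 0 < x) : HasDerivAt (D1 q) (q * D1 (q-1) x) x := by
  have h1 := hd_shift q 1 x (by linarith)
  have h0 := Real.hasDerivAt_rpow_const (x := x) (p := q) (Or.inl hx.ne')
  have := h1.sub h0
  convert this using 1
  · rfl
  · rfl
  · rfl
  simp [D1]; ring

lemma mvt_step (u v : ℝ → ℝ) (a : ℝ) (ha : 0 < a)
    (h : ∀ x : ℝ, 0 < x → HasDerivAt u (v x) x) :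
    ∃ ξ ∈ Set.Ioo a (a+1), u (a+1) - u a = v ξ := by
  obtain ⟨c, hc, hc'⟩ := exists_hasDerivAt_eq_slope u v (by linarith : a < a+1)
    (fun x hx => (h x (lt_of_lt_of_le ha hx.1)).continuousAt.continuousWithinAt)
    (fun x hx => h x (lt_trans ha hx.1))
  refine ⟨c, hc, ?_⟩
  have e : a + 1 - a = 1 := by ring
  rw [e, div_one] at hc'
  exact hc'.symm

lemma delta4_bound (p : ℝ) (hp0 : 0 < p) (hp2 : p < 2) (a : ℝ) (ha : 1 ≤ a) :
    |(a+4)^p - 4*(a+3)^p + 6*(a+2)^p - 4*(a+1)^p + a^p| ≤ 12 * a ^ (-2 : ℝ) := by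
  have ha0 : 0 < a := by linarith
  obtain ⟨ξ1, hξ1, e1⟩ := mvt_step (D3 p) (fun x => p * D3 (p-1) x) a ha0
    (fun x hx => hd_D3 p x hx)
  have hξ1l : 0 < ξ1 := by have := hξ1.1; linarith
  obtain ⟨ξ2, hξ2, e2⟩ := mvt_step (D2 (p-1)) (fun x => (p-1) * D2 (p-2) x) ξ1 hξ1l
    (fun x hx => by simpa [show p-1-1 = p-2 from by ring] using hd_D2 (p-1) x hx)
  have hξ2l : 0 < ξ2 := by have := hξ2.1; linarith
  obtain ⟨ξ3, hξ3, e3⟩ := mvt_step (D1 (p-2)) (fun x => (p-2) * D1 (p-3) x) ξ2 hξ2l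
    (fun x hx => by simpa [show p-2-1 = p-3 from by ring] using hd_D1 (p-2) x hx)
  have hξ3l : 0 < ξ3 := by have := hξ3.1; linarith
  obtain ⟨ξ4, hξ4, e4⟩ := mvt_step (fun x => x ^ (p-3)) (fun x => (p-3) * x ^ (p-4)) ξ3 hξ3l
    (fun x hx => by
      simpa [show p-3-1 = p-4 from by ring] using
        Real.hasDerivAt_rpow_const (x := x) (p := p-3) (Or.inl hx.ne'))
  have hξ4a : a < ξ4 := by have := hξ1.1; have := hξ2.1; have := hξ3.1; have := hξ4.1; linarith
  -- identify the LHS with the telescoped expression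
  have key1 : (a+4)^p - 4*(a+3)^p + 6*(a+2)^p - 4*(a+1)^p + a^p = D3 p (a+1) - D3 p a := by
    simp only [D3]
    rw [show a+1+3 = a+4 from by ring, show a+1+2 = a+3 from by ring, show a+1+1 = a+2 from by ring]
    ring
  have rel1 : D3 (p-1) ξ1 = D2 (p-1) (ξ1+1) - D2 (p-1) ξ1 := by
    simp only [D3, D2]
    rw [show ξ1+1+2 = ξ1+3 from by ring, show ξ1+1+1 = ξ1+2 from by ring]
    ring
  have rel2 : D2 (p-2) ξ2 = D1 (p-2) (ξ2+1) - D1 (p-2) ξ2 := by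
    simp only [D2, D1]
    rw [show ξ2+1+1 = ξ2+2 from by ring]
    ring
  have rel3 : D1 (p-3) ξ3 = (ξ3+1) ^ (p-3) - ξ3 ^ (p-3) := rfl
  have main : (a+4)^p - 4*(a+3)^p + 6*(a+2)^p - 4*(a+1)^p + a^p
      = p * ((p-1) * ((p-2) * ((p-3) * ξ4 ^ (p-4)))) := by
    rw [key1, e1, rel1, e2, rel2, e3, rel3, e4]
  have hX0 : (0:ℝ) ≤ ξ4 ^ (p-4) := Real.rpow_nonneg (by linarith) _
  have hX : ξ4 ^ (p-4) ≤ a ^ (-2:ℝ) := by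
    calc ξ4 ^ (p-4) ≤ ξ4 ^ (-2:ℝ) :=
          Real.rpow_le_rpow_of_exponent_le (by linarith) (by linarith)
      _ ≤ a ^ (-2:ℝ) := Real.rpow_le_rpow_of_nonpos ha0 (le_of_lt hξ4a) (by norm_num)
  rw [main]
  have habs : |p * ((p-1) * ((p-2) * ((p-3) * ξ4 ^ (p-4))))|
      = |p| * (|p-1| * (|p-2| * (|p-3| * |ξ4 ^ (p-4)|))) := by
    simp [abs_mul]
  rw [habs, abs_of_nonneg hX0]
  have h1 : |p| ≤ 2 := abs_le.2 ⟨by linarith, by linarith⟩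
  have h2 : |p-1| ≤ 1 := abs_le.2 ⟨by linarith, by linarith⟩
  have h3 : |p-2| ≤ 2 := abs_le.2 ⟨by linarith, by linarith⟩
  have h4 : |p-3| ≤ 3 := abs_le.2 ⟨by linarith, by linarith⟩
  calc |p| * (|p-1| * (|p-2| * (|p-3| * ξ4 ^ (p-4))))
      ≤ 2 * (1 * (2 * (3 * a ^ (-2:ℝ)))) := by
        gcongr
    _ = 12 * a ^ (-2:ℝ) := by ring

lemma rpow_neg_two_eq (x : ℝ) (hx : 0 < x) : x ^ (-2 : ℝ) = (x ^ 2)⁻¹ := by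
  rw [show (-2:ℝ) = ((-2:ℤ):ℝ) by norm_num, Real.rpow_intCast]
  simp [zpow_neg]

/-- Σ_{k≥1} |γ_H(k)| and Σ_{k≥1} γ_H(k)² both converge. -/
theorem gamma_summable
    (H : ℝ) (hH : H ∈ Set.Ioo (0 : ℝ) 1)
    (γ : ℤ → ℝ)
    (hγ : ∀ k : ℤ, γ k = -((|(k : ℝ) - 2| ^ (2 * H) - 4 * |(k : ℝ) - 1| ^ (2 * H)
        + 6 * |(k : ℝ)| ^ (2 * H) - 4 * |(k : ℝ) + 1| ^ (2 * H)
        + |(k : ℝ) + 2| ^ (2 * H)) / 2)) :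
    Summable (fun k : ℕ => |γ ((k : ℤ) + 1)|) ∧
    Summable (fun k : ℕ => (γ ((k : ℤ) + 1)) ^ 2) := by
  obtain ⟨hH0, hH1⟩ := hH
  have key : ∀ k : ℕ, |γ ((k:ℤ) + 3)| ≤ 6 * ((k:ℝ)+1) ^ (-2:ℝ) := by
    intro k
    have h0 : (0:ℝ) ≤ (k:ℝ) := Nat.cast_nonneg k
    have e : γ ((k:ℤ)+3) = -(((((k:ℝ)+1)+4) ^ (2*H) - 4*(((k:ℝ)+1)+3) ^ (2*H)
        + 6*(((k:ℝ)+1)+2) ^ (2*H) - 4*(((k:ℝ)+1)+1) ^ (2*H) + ((k:ℝ)+1) ^ (2*H)) / 2) := by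
      rw [hγ]
      push_cast
      rw [abs_of_pos (by linarith : (0:ℝ) < (k:ℝ)+3-2),
          abs_of_pos (by linarith : (0:ℝ) < (k:ℝ)+3-1),
          abs_of_pos (by linarith : (0:ℝ) < (k:ℝ)+3),
          abs_of_pos (by linarith : (0:ℝ) < (k:ℝ)+3+1),
          abs_of_pos (by linarith : (0:ℝ) < (k:ℝ)+3+2),
          show (k:ℝ)+3-2 = (k:ℝ)+1 from by ring,
          show (k:ℝ)+3-1 = ((k:ℝ)+1)+1 from by ring,
          show (k:ℝ)+3 = ((k:ℝ)+1)+2 from by ring]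
      rw [show (k:ℝ)+1+2+1 = ((k:ℝ)+1)+3 from by ring,
          show (k:ℝ)+1+2+2 = ((k:ℝ)+1)+4 from by ring]
      ring
    have hb := delta4_bound (2*H) (by linarith) (by linarith) ((k:ℝ)+1) (by linarith)
    rw [e, abs_neg, abs_div, abs_two]
    rw [div_le_iff₀ (by norm_num : (0:ℝ) < 2)]
    calc |(((k:ℝ)+1)+4) ^ (2*H) - 4*(((k:ℝ)+1)+3) ^ (2*H) + 6*(((k:ℝ)+1)+2) ^ (2*H)
          - 4*(((k:ℝ)+1)+1) ^ (2*H) + ((k:ℝ)+1) ^ (2*H)|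
        ≤ 12 * ((k:ℝ)+1) ^ (-2:ℝ) := hb
      _ = 6 * ((k:ℝ)+1) ^ (-2:ℝ) * 2 := by ring
  have hsum : Summable (fun k : ℕ => ((k:ℝ)+1) ^ (-2:ℝ)) := by
    have h2 : Summable (fun n : ℕ => ((n:ℝ)^2)⁻¹) := by
      simpa [one_div] using Real.summable_one_div_nat_pow.mpr (by norm_num : 1 < 2)
    have h3 := (summable_nat_add_iff 1).mpr h2
    refine h3.congr fun n => ?_
    rw [rpow_neg_two_eq _ (by positivity)]
    push_cast
    ring_nf
  have hcast : ∀ k : ℕ, ((k+2:ℕ):ℤ) + 1 = (k:ℤ) + 3 := by intro k; push_cast; ring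
  constructor
  · rw [← summable_nat_add_iff 2]
    refine Summable.of_nonneg_of_le (fun k => abs_nonneg _) (fun k => ?_) (hsum.mul_left 6)
    rw [hcast k]
    exact key k
  · rw [← summable_nat_add_iff 2]
    refine Summable.of_nonneg_of_le (fun k => sq_nonneg _) (fun k => ?_) (hsum.mul_left 36)
    rw [hcast k]
    have hb := key k
    have ht0 : (0:ℝ) ≤ ((k:ℝ)+1) ^ (-2:ℝ) := Real.rpow_nonneg (by positivity) _
    have ht1 : ((k:ℝ)+1) ^ (-2:ℝ) ≤ 1 :=
      Real.rpow_le_one_of_one_le_of_nonpos (by have := Nat.cast_nonneg (α := ℝ) k; linarith)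
        (by norm_num)
    have habs : (0:ℝ) ≤ |γ ((k:ℤ)+3)| := abs_nonneg _
    have hsq : (γ ((k:ℤ)+3))^2 = |γ ((k:ℤ)+3)|^2 := (sq_abs _).symm
    nlinarith [mul_self_le_mul_self habs hb]
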